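/- Let k > 0 and m > 1 be rationals and let a > 0 be rational. If 2km(m+1) = 2km/a + ak(m²−1) + √((2km/a)² + a²k²(m²−1)²) with the square root rational, then (a−1)((m²−1)a − 2m) = 0, i.e., a = 1 or a = 2m/(m²−1). Consequently there are no two non-congruent rational right triangles with the same area and the same perimeter. -/

import Mathlib

/-- If an area-preserving map (x,y) ↦ (x/a, ay) sends one rational right triangle with
legs 2km, k(m²−1) to another of the same perimeter, then a = 1 or a = 2m/(m²−1);
consequently the image triangle is congruent to the original. -/
theorem stmt2 (k m a w : ℚ) (hk : 0 < k) (hm : 1 < m) (ha : 0 < a)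
    (hw : 0 ≤ w) (hw2 : w^2 = (2*k*m/a)^2 + a^2*k^2*(m^2-1)^2)
    (hper : 2*k*m*(m+1) = 2*k*m/a + a*k*(m^2-1) + w) :
    (a - 1) * ((m^2-1)*a - 2*m) = 0 ∧ (a = 1 ∨ a = 2*m/(m^2-1)) ∧
    ((2*k*m/a = 2*k*m ∧ a*k*(m^2-1) = k*(m^2-1)) ∨
     (2*k*m/a = k*(m^2-1) ∧ a*k*(m^2-1) = 2*k*m)) := by
  have ha0 : a ≠ 0 := ha.ne'
  have hk0 : k ≠ 0 := hk.ne'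
  have hm0 : (0:ℚ) < m := lt_trans one_pos hm
  have hm1 : m^2 - 1 ≠ 0 := by nlinarith
  have hwv : w = 2*k*m*(m+1) - 2*k*m/a - a*k*(m^2-1) := by linarith
  have h2 := hw2
  rw [hwv] at h2
  field_simp at h2
  have key : (a-1)*((m^2-1)*a - 2*m) = 0 := by
    have hc : (4*k^2*m*(m+1)*a) ≠ 0 := by positivity
    refine mul_left_cancel₀ hc (b := (a-1)*((m^2-1)*a - 2*m)) (c := 0) ?_
    linear_combination (-k^2) * h2
  refine ⟨key, ?_, ?_⟩ <;>
    rcases mul_eq_zero.mp key with h | h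
  · left; linarith
  · right
    rw [eq_div_iff hm1]
    linarith
  · left
    have ha1 : a = 1 := by linarith
    rw [ha1]; constructor <;> ring
  · right
    have ha2 : a = 2*m/(m^2-1) := by rw [eq_div_iff hm1]; linarith
    rw [ha2]
    constructor <;> field_simp <;> ring
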